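/- Let b(z) = -z - sin z. Then b is non-increasing on ℝ, Lipschitz-continuous with constant 2, and there exists ε > 0 such that for all r, z ∈ ℝ, |b(r) - b(z)| ≥ ε ρ_3(|r - z|), where ρ_3(x) = x³ for x ∈ [0,1] and ρ_3(x) = 3x - 2 for x ≥ 1. -/

import Mathlib

/-- `ρ_3(x) = x³` on `[0,1]` and `ρ_3(x) = 3x - 2` on `[1,∞)`. -/
noncomputable def ρ3 (x : ℝ) : ℝ := if x ≤ 1 then x ^ 3 else 3 * x - 2

/-- `sin` is 1-Lipschitz. -/
lemma sin_lip (a b : ℝ) : |Real.sin a - Real.sin b| ≤ |a - b| := by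
  rw [Real.sin_sub_sin, abs_mul, abs_mul, abs_two]
  have h1 : |Real.sin ((a - b) / 2)| ≤ |(a - b) / 2| := Real.abs_sin_le_abs
  have h2 : |Real.cos ((a + b) / 2)| ≤ 1 := Real.abs_cos_le_one _
  have h3 : |(a - b) / 2| = |a - b| / 2 := by rw [abs_div]; norm_num
  have h0 : (0:ℝ) ≤ |Real.sin ((a - b) / 2)| := abs_nonneg _
  nlinarith [abs_nonneg (a - b)]

/-- Upper bound on `sin x` from the Taylor estimate. -/
lemma sin_upper {x : ℝ} (h0 : 0 ≤ x) (h1 : x ≤ 1) :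
    Real.sin x ≤ x - x ^ 3 / 6 + x ^ 4 * (5 / 96) := by
  have hx : |x| ≤ 1 := by rwa [abs_of_nonneg h0]
  have := Real.sin_bound hx
  rw [abs_of_nonneg h0] at this
  have := (abs_le.1 this).2
  nlinarith [pow_nonneg h0 4, mul_le_mul_of_nonneg_left h1 (pow_nonneg h0 4)]

/-- Key estimate: `(1/1000) ρ3 h ≤ h - 2 |sin (h/2)|` for `h ≥ 0`. -/
lemma key (h : ℝ) (hh : 0 ≤ h) : (1/1000) * ρ3 h ≤ h - 2 * |Real.sin (h / 2)| := by
  unfold ρ3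
  by_cases hle : h ≤ 1
  · rw [if_pos hle]
    have hs : |Real.sin (h / 2)| = Real.sin (h / 2) := by
      rw [abs_of_nonneg]
      apply Real.sin_nonneg_of_nonneg_of_le_pi (by linarith)
      nlinarith [Real.pi_gt_three]
    rw [hs]
    have hb := sin_upper (x := h / 2) (by linarith) (by linarith)
    have e1 : (h / 2) ^ 3 = h ^ 3 / 8 := by ring
    have e2 : (h / 2) ^ 4 = h ^ 4 / 16 := by ring
    rw [e1, e2] at hb
    have h4 : h ^ 4 ≤ h ^ 3 := pow_le_pow_of_le_one hh hle (by norm_num)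
    nlinarith [pow_nonneg hh 3]
  · rw [if_neg hle]
    push_neg at hle
    by_cases h3 : h ≤ 3
    · have hlip : |Real.sin (h / 2)| - |Real.sin (1 / 2)| ≤ |h / 2 - 1 / 2| :=
        le_trans (abs_sub_abs_le_abs_sub _ _) (sin_lip _ _)
      have habs : |h / 2 - 1 / 2| = h / 2 - 1 / 2 := abs_of_nonneg (by linarith)
      have hs12 : |Real.sin (1 / 2)| = Real.sin (1 / 2) := by
        rw [abs_of_nonneg]
        apply Real.sin_nonneg_of_nonneg_of_le_pi (by norm_num)
        nlinarith [Real.pi_gt_three]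
      have hb := sin_upper (x := (1:ℝ) / 2) (by norm_num) (by norm_num)
      rw [habs, hs12] at hlip
      norm_num at hb
      linarith
    · push_neg at h3
      have := Real.abs_sin_le_one (h / 2)
      linarith

theorem stmt16 :
    Antitone (fun z : ℝ => -z - Real.sin z) ∧
    LipschitzWith 2 (fun z : ℝ => -z - Real.sin z) ∧
    ∃ ε : ℝ, 0 < ε ∧ ∀ r z : ℝ,
      ε * ρ3 |r - z| ≤ |(-r - Real.sin r) - (-z - Real.sin z)| := by
  refine ⟨?_, ?_, ?_⟩
  · intro a b hab
    simp only
    have h1 := sin_lip a b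
    have he : |a - b| = b - a := by rw [abs_of_nonpos (by linarith)]; ring
    rw [he] at h1
    have := (abs_le.1 h1).2
    linarith
  · apply LipschitzWith.of_dist_le_mul
    intro x y
    rw [Real.dist_eq, Real.dist_eq]
    have hkey : |(-x - Real.sin x) - (-y - Real.sin y)| ≤ 2 * |x - y| := by
      have heq : (-x - Real.sin x) - (-y - Real.sin y) = (y - x) + (Real.sin y - Real.sin x) := by
        ring
      rw [heq]
      have ha := abs_add_le (y - x) (Real.sin y - Real.sin x)
      have h1 := sin_lip y x
      have h2 : |y - x| = |x - y| := abs_sub_comm _ _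
      linarith
    push_cast
    exact hkey
  · refine ⟨1/1000, by norm_num, fun r z => ?_⟩
    have hk := key |r - z| (abs_nonneg _)
    have hsin : |Real.sin r - Real.sin z| ≤ 2 * |Real.sin (|r - z| / 2)| := by
      rw [Real.sin_sub_sin, abs_mul, abs_mul, abs_two]
      have h2 : |Real.cos ((r + z) / 2)| ≤ 1 := Real.abs_cos_le_one _
      have h4 : |Real.sin ((r - z) / 2)| = |Real.sin (|r - z| / 2)| := by
        rcases abs_choice (r - z) with hc | hc
        · rw [hc]
        · rw [hc]
          have : -(r - z) / 2 = -((r - z) / 2) := by ring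
          rw [this, Real.sin_neg, abs_neg]
      rw [h4]
      have h0 : (0:ℝ) ≤ |Real.sin (|r - z| / 2)| := abs_nonneg _
      nlinarith
    have hlow : |r - z| - |Real.sin r - Real.sin z| ≤ |(-r - Real.sin r) - (-z - Real.sin z)| := by
      have heq : (-r - Real.sin r) - (-z - Real.sin z) = -((r - z) + (Real.sin r - Real.sin z)) := by
        ring
      rw [heq, abs_neg]
      have := abs_sub_abs_le_abs_sub (r - z) (-(Real.sin r - Real.sin z))
      simp only [abs_neg, sub_neg_eq_add] at this
      linarith
    linarith
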